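/- Let L be a set and let (X,α) be an L-labeled metric space. Then there exists a sequence ((X_n, α_n))_{n∈ℕ} of L-labeled metric spaces, each X_n a finite metric space whose metric takes only rational values, such that d^L_GH(X_n,α_n;X,α) → 0 as n → ∞. -/

import Mathlib

open Filter Topology Metric Set

/-- A `(t,L)`-admissible pseudometric on the disjoint union `X ⊕ Y` of two `L`-labeled
compact metric spaces `(X, α)` and `(Y, β)`: it is a pseudometric restricting to the
metrics of `X` and `Y`, the Hausdorff distance between `X` and `Y` computed with it is
at most `t`, and `sup_{ℓ ∈ L} d(α ℓ, β ℓ) ≤ t`. -/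
def IsAdmissible {L X Y : Type*} [MetricSpace X] [MetricSpace Y]
    (α : L → X) (β : L → Y) (t : ℝ) (d : X ⊕ Y → X ⊕ Y → ℝ) : Prop :=
  (∀ p, d p p = 0) ∧
  (∀ p q, d p q = d q p) ∧
  (∀ p q r, d p r ≤ d p q + d q r) ∧
  (∀ x x' : X, d (Sum.inl x) (Sum.inl x') = dist x x') ∧
  (∀ y y' : Y, d (Sum.inr y) (Sum.inr y') = dist y y') ∧
  (∀ x : X, ∀ ε > (0 : ℝ), ∃ y : Y, d (Sum.inl x) (Sum.inr y) ≤ t + ε) ∧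
  (∀ y : Y, ∀ ε > (0 : ℝ), ∃ x : X, d (Sum.inl x) (Sum.inr y) ≤ t + ε) ∧
  (∀ ℓ : L, d (Sum.inl (α ℓ)) (Sum.inr (β ℓ)) ≤ t)

/-- The labeled Gromov–Hausdorff distance of `(X, α)` and `(Y, β)`. -/
noncomputable def lghDist {L X Y : Type*} [MetricSpace X] [MetricSpace Y]
    (α : L → X) (β : L → Y) : ℝ :=
  sInf {t : ℝ | 0 ≤ t ∧ ∃ d : X ⊕ Y → X ⊕ Y → ℝ, IsAdmissible α β t d}


/-- A bundled `L`-labeled compact metric space: a compact metric space together with a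
labeling `L → carrier`. -/
structure LabeledSpace (L : Type*) where
  carrier : Type*
  [ms : MetricSpace carrier]
  [cs : CompactSpace carrier]
  label : L → carrier

attribute [instance] LabeledSpace.ms LabeledSpace.cs



noncomputable def snapDist {X : Type*} [MetricSpace X] (m : ℕ) (x y : X) : ℝ :=
  (⌈dist x y * (m + 1)⌉ : ℤ) / (m + 1)

section snap
variable {X : Type*} [MetricSpace X] (m : ℕ)

lemma mpos : (0:ℝ) < (m:ℝ) + 1 := by positivity

lemma snapDist_self (x : X) : snapDist m x x = 0 := by
  simp [snapDist]

lemma snapDist_comm (x y : X) : snapDist m x y = snapDist m y x := by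
  simp [snapDist, dist_comm]

lemma le_snapDist (x y : X) : dist x y ≤ snapDist m x y := by
  rw [snapDist, le_div_iff₀ (mpos m)]
  exact Int.le_ceil _

lemma snapDist_le (x y : X) : snapDist m x y ≤ dist x y + 1 / (m + 1) := by
  rw [snapDist, div_le_iff₀ (mpos m)]
  have := (Int.ceil_lt_add_one (dist x y * (m + 1))).le
  calc (⌈dist x y * (m + 1)⌉ : ℝ) ≤ dist x y * (m + 1) + 1 := this
    _ = (dist x y + 1 / (m + 1)) * (m + 1) := by field_simp

lemma snapDist_triangle (x y z : X) :
    snapDist m x z ≤ snapDist m x y + snapDist m y z := by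
  rw [snapDist, snapDist, snapDist, ← add_div, div_le_div_iff_of_pos_right (mpos m)]
  rw [show ((⌈dist x y * (m+1)⌉ : ℝ) + ⌈dist y z * (m+1)⌉) = ((⌈dist x y * (m+1)⌉ + ⌈dist y z * (m+1)⌉ : ℤ) : ℝ) by push_cast; ring]
  rw [Int.cast_le, Int.ceil_le]
  push_cast
  calc dist x z * (m+1) ≤ (dist x y + dist y z) * (m+1) := by
        have := dist_triangle x y z
        nlinarith [mpos m]
    _ = dist x y * (m+1) + dist y z * (m+1) := by ring
    _ ≤ (⌈dist x y * (m+1)⌉ : ℝ) + ⌈dist y z * (m+1)⌉ := by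
        gcongr <;> exact Int.le_ceil _

lemma snapDist_eq_zero {x y : X} (h : snapDist m x y = 0) : x = y := by
  have h1 := le_snapDist m x y
  rw [h] at h1
  exact eq_of_dist_eq_zero (le_antisymm h1 dist_nonneg)

lemma snapDist_rat (x y : X) : ∃ q : ℚ, snapDist m x y = (q : ℝ) := by
  refine ⟨(⌈dist x y * (m + 1)⌉ : ℚ) / (m + 1), ?_⟩
  rw [snapDist]
  push_cast
  ring

/-- The snapped (rational-valued) metric pulled back along an injection `g : I → X`. -/
noncomputable def snapMetric {I : Type*} (g : I → X) (hg : Function.Injective g) :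
    MetricSpace I where
  dist a b := snapDist m (g a) (g b)
  dist_self a := snapDist_self m (g a)
  dist_comm a b := snapDist_comm m (g a) (g b)
  dist_triangle a b c := snapDist_triangle m (g a) (g b) (g c)
  eq_of_dist_eq_zero h := hg (snapDist_eq_zero m h)

end snap

noncomputable def lgDist {X : Type*} [MetricSpace X] {I : Type*} (m : ℕ) (g : I → X) :
    (I ⊕ X) → (I ⊕ X) → ℝ
  | Sum.inl a, Sum.inl b => snapDist m (g a) (g b)
  | Sum.inl a, Sum.inr x => dist (g a) x + 1 / (m + 1)
  | Sum.inr x, Sum.inl a => dist (g a) x + 1 / (m + 1)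
  | Sum.inr x, Sum.inr y => dist x y

section glue
variable {X : Type*} [MetricSpace X] {I : Type*} (m : ℕ) (g : I → X)

lemma lgDist_self (p : I ⊕ X) : lgDist m g p p = 0 := by
  rcases p with a | x
  · exact snapDist_self m (g a)
  · simp [lgDist]

lemma lgDist_comm (p q : I ⊕ X) : lgDist m g p q = lgDist m g q p := by
  rcases p with a | x <;> rcases q with b | y <;>
    simp [lgDist, dist_comm, snapDist_comm]

lemma lgDist_triangle (p q r : I ⊕ X) :
    lgDist m g p r ≤ lgDist m g p q + lgDist m g q r := by
  have hc : (0:ℝ) ≤ 1 / (m + 1) := by positivity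
  rcases p with a | x <;> rcases q with b | y <;> rcases r with c | z <;>
    simp only [lgDist]
  · exact snapDist_triangle m (g a) (g b) (g c)
  · have := le_snapDist m (g a) (g b)
    have := dist_triangle (g a) (g b) z
    linarith
  · have := snapDist_le m (g a) (g c)
    have h2 := dist_triangle (g a) y (g c)
    have h3 := dist_comm (g c) y
    linarith
  · have := dist_triangle (g a) y z
    linarith
  · have := le_snapDist m (g b) (g c)
    have h2 := dist_triangle (g c) (g b) x
    have h3 := dist_comm (g b) (g c)
    have h4 := snapDist_comm m (g b) (g c)
    linarith
  · have := dist_triangle x (g b) z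
    have h2 := dist_comm x (g b)
    linarith
  · have := dist_triangle (g c) y x
    have h2 := dist_comm x y
    linarith
  · exact dist_triangle x y z

end glue

/-- Every `L`-labeled compact metric space is the labeled Gromov–Hausdorff limit of a
sequence of finite `L`-labeled metric spaces whose metrics take only rational values. -/
theorem stmt3 {L X : Type*} [MetricSpace X] [CompactSpace X] (α : L → X) :
    ∃ A : ℕ → LabeledSpace L,
      (∀ n, Finite (A n).carrier) ∧
      (∀ n, ∀ x y : (A n).carrier, ∃ q : ℚ, dist x y = (q : ℝ)) ∧
      Filter.Tendsto (fun n => lghDist (A n).label α) Filter.atTop (nhds 0) := by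
  have key : ∀ n : ℕ, ∃ A : LabeledSpace L, Finite A.carrier ∧
      (∀ x y : A.carrier, ∃ q : ℚ, dist x y = (q : ℝ)) ∧
      0 ≤ lghDist A.label α ∧ lghDist A.label α ≤ 2 / (n + 1) := by
    intro n
    have hε : (0:ℝ) < 1 / (n + 1) := by positivity
    obtain ⟨S, -, hSfin, hScov⟩ := isCompact_univ.finite_cover_balls (X := X) hε
    haveI := hSfin.fintype
    set e := Fintype.equivFin ↥S with he
    set g : ULift.{_} (Fin (Fintype.card ↥S)) → X := fun i => (e.symm i.down : X) with hgdef
    have hg : Function.Injective g := by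
      intro i j hij
      have : e.symm i.down = e.symm j.down := Subtype.ext hij
      have := e.symm.injective this
      exact ULift.ext _ _ this
    have hgf : ∀ s : ↥S, g ⟨e s⟩ = (s : X) := by
      intro s; simp [hgdef]
    have hcov : ∀ x : X, ∃ s : ↥S, dist x (s : X) ≤ 1 / (n + 1) := by
      intro x
      have := hScov (mem_univ x)
      simp only [mem_iUnion, mem_ball] at this
      obtain ⟨a, ha, hd⟩ := this
      exact ⟨⟨a, ha⟩, hd.le⟩
    choose f hf using hcov
    letI : MetricSpace (ULift.{_} (Fin (Fintype.card ↥S))) := snapMetric n g hg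
    set A : LabeledSpace L :=
      { carrier := ULift.{_} (Fin (Fintype.card ↥S)), label := fun ℓ => ⟨e (f (α ℓ))⟩ } with hA
    have hdist : ∀ x y : A.carrier, dist x y = snapDist n (g x) (g y) := fun _ _ => rfl
    have h21 : (2:ℝ) / (n+1) = 1/(n+1) + 1/(n+1) := by ring
    have hadm : IsAdmissible A.label α (2 / (n + 1)) (lgDist n g) := by
      refine ⟨lgDist_self n g, lgDist_comm n g, lgDist_triangle n g, ?_, ?_, ?_, ?_, ?_⟩
      · intro x x'; exact (hdist x x').symm
      · intro y y'; rfl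
      · intro a ε hε'
        refine ⟨g a, ?_⟩
        show dist (g a) (g a) + 1 / (n + 1) ≤ 2 / (n + 1) + ε
        rw [dist_self]
        linarith [hε.le]
      · intro y ε hε'
        refine ⟨⟨e (f y)⟩, ?_⟩
        show dist (g ⟨e (f y)⟩) y + 1 / (n + 1) ≤ 2 / (n + 1) + ε
        rw [hgf, dist_comm]
        linarith [hf y]
      · intro ℓ
        show dist (g ⟨e (f (α ℓ))⟩) (α ℓ) + 1 / (n + 1) ≤ 2 / (n + 1)
        rw [hgf, dist_comm]
        linarith [hf (α ℓ)]
    have hmem : (2 / ((n:ℝ) + 1)) ∈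
        {t : ℝ | 0 ≤ t ∧ ∃ d : A.carrier ⊕ X → A.carrier ⊕ X → ℝ,
          IsAdmissible A.label α t d} :=
      ⟨by positivity, lgDist n g, hadm⟩
    refine ⟨A, inferInstance, ?_, ?_, ?_⟩
    · intro x y
      obtain ⟨q, hq⟩ := snapDist_rat n (g x) (g y)
      exact ⟨q, (hdist x y).trans hq⟩
    · exact Real.sInf_nonneg (fun t ht => ht.1)
    · exact csInf_le ⟨0, fun t ht => ht.1⟩ hmem
  choose A h1 h2 h3 h4 using key
  refine ⟨A, h1, h2, ?_⟩
  have hgl : Tendsto (fun n : ℕ => 2 / ((n:ℝ) + 1)) atTop (𝓝 0) := by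
    have := tendsto_one_div_add_atTop_nhds_zero_nat.const_mul (2:ℝ)
    simpa [mul_one_div, div_eq_mul_inv] using this
  exact squeeze_zero h3 h4 hgl
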